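/- Let A = (1/2)(Ric − (t₀/6)R·g) on a 4-manifold, viewed pointwise as a symmetric endomorphism via g. If the eigenvalues of A lie in Γ₂⁺, then pointwise (t₀−1)·R·g < 2·Ric < (2−t₀)·R·g as quadratic forms. -/

import Mathlib

open Matrix

/-- σ₂(A) = (1/2)((tr A)² − tr(A²)) for a 4×4 matrix. -/
noncomputable def sigma2M (A : Matrix (Fin 4) (Fin 4) ℝ) : ℝ :=
  ((Matrix.trace A) ^ 2 - Matrix.trace (A * A)) / 2

lemma key1 (a b c d : ℝ) (h1 : 0 < a + b + c + d)
    (h2 : 0 < (a + b + c + d) ^ 2 - (a ^ 2 + b ^ 2 + c ^ 2 + d ^ 2)) :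
    0 < 4 * a + 2 * (a + b + c + d) ∧ 0 < 4 * (a + b + c + d) - 4 * a := by
  constructor <;>
    nlinarith [sq_nonneg (b - c), sq_nonneg (b - d), sq_nonneg (c - d), sq_nonneg (b + c + d),
      sq_nonneg a, mul_self_nonneg (b + c + d - 3 * a)]

lemma key (μ : Fin 4 → ℝ) (hσ1 : 0 < ∑ i, μ i)
    (hσ2 : 0 < (∑ i, μ i) ^ 2 - ∑ i, (μ i) ^ 2) (k : Fin 4) :
    0 < 4 * μ k + 2 * ∑ i, μ i ∧ 0 < 4 * (∑ i, μ i) - 4 * μ k := by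
  simp only [Fin.sum_univ_four] at *
  have h0 := key1 (μ 0) (μ 1) (μ 2) (μ 3) hσ1 (by linarith)
  have h1 := key1 (μ 1) (μ 0) (μ 2) (μ 3) (by linarith) (by nlinarith)
  have h2 := key1 (μ 2) (μ 0) (μ 1) (μ 3) (by linarith) (by nlinarith)
  have h3 := key1 (μ 3) (μ 0) (μ 1) (μ 2) (by linarith) (by nlinarith)
  fin_cases k <;> constructor <;> simp <;>
    linarith [h0.1, h0.2, h1.1, h1.2, h2.1, h2.2, h3.1, h3.2]

lemma posdef_conj (U : Matrix.unitaryGroup (Fin 4) ℝ) (d : Fin 4 → ℝ) (hd : ∀ i, 0 < d i) :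
    ((U : Matrix (Fin 4) (Fin 4) ℝ) * Matrix.diagonal d *
      star (U : Matrix (Fin 4) (Fin 4) ℝ)).PosDef := by
  have hD : (Matrix.diagonal d).PosDef := Matrix.PosDef.diagonal hd
  rw [Matrix.posDef_iff_dotProduct_mulVec]
  constructor
  · rw [Matrix.star_eq_conjTranspose]
    exact Matrix.isHermitian_mul_mul_conjTranspose _ hD.1
  · intro x hx
    have h9 : (U : Matrix (Fin 4) (Fin 4) ℝ) *ᵥ
        (star (U : Matrix (Fin 4) (Fin 4) ℝ) *ᵥ x) = x := by
      rw [Matrix.mulVec_mulVec, Matrix.mem_unitaryGroup_iff.mp U.2, Matrix.one_mulVec]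
    have hy : star (U : Matrix (Fin 4) (Fin 4) ℝ) *ᵥ x ≠ 0 := by
      intro h
      exact hx (by rw [← h9, h, Matrix.mulVec_zero])
    have := (Matrix.posDef_iff_dotProduct_mulVec.mp hD).2 hy
    simpa only [Matrix.star_mulVec, Matrix.dotProduct_mulVec, Matrix.vecMul_vecMul,
      Matrix.star_eq_conjTranspose, Matrix.conjTranspose_conjTranspose, Matrix.mul_assoc]
      using this

/-- Pointwise form of the Ricci inequalities: if S is a symmetric endomorphism of a
4-dimensional inner product space with trace r (playing the role of g⁻¹Ric, r = R), and
A = (1/2)(S − (t₀/6)·r·I) has eigenvalues in Γ₂⁺, then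
(t₀−1)·r·I < 2S < (2−t₀)·r·I as quadratic forms. -/
theorem ricci_inequalities (t₀ : ℝ) (S : Matrix (Fin 4) (Fin 4) ℝ) (hS : S.IsSymm)
    (h2 : 0 < sigma2M ((1 / 2 : ℝ) •
      (S - (t₀ / 6 * Matrix.trace S) • (1 : Matrix (Fin 4) (Fin 4) ℝ))))
    (h1 : 0 < Matrix.trace ((1 / 2 : ℝ) •
      (S - (t₀ / 6 * Matrix.trace S) • (1 : Matrix (Fin 4) (Fin 4) ℝ)))) :
    ((2 : ℝ) • S - ((t₀ - 1) * Matrix.trace S) • (1 : Matrix (Fin 4) (Fin 4) ℝ)).PosDef ∧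
    (((2 - t₀) * Matrix.trace S) • (1 : Matrix (Fin 4) (Fin 4) ℝ) - (2 : ℝ) • S).PosDef := by
  set r := Matrix.trace S with hr
  set A := (1 / 2 : ℝ) • (S - (t₀ / 6 * r) • (1 : Matrix (Fin 4) (Fin 4) ℝ)) with hAdef
  -- A is symmetric, hence Hermitian over ℝ
  have hAs : A.IsSymm := by
    rw [hAdef, Matrix.IsSymm, Matrix.transpose_smul, Matrix.transpose_sub,
      Matrix.transpose_smul, Matrix.transpose_one, hS]
  have hA : A.IsHermitian := by
    rw [Matrix.IsHermitian, Matrix.conjTranspose_eq_transpose_of_trivial, hAs]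
  set Uc : Matrix (Fin 4) (Fin 4) ℝ := (hA.eigenvectorUnitary : Matrix (Fin 4) (Fin 4) ℝ)
    with hUc
  set μ : Fin 4 → ℝ := hA.eigenvalues with hμ
  have hUU : Uc * star Uc = 1 := Matrix.mem_unitaryGroup_iff.mp hA.eigenvectorUnitary.2
  have hUU' : star Uc * Uc = 1 := Matrix.mem_unitaryGroup_iff'.mp hA.eigenvectorUnitary.2
  have hspec : A = Uc * Matrix.diagonal μ * star Uc := by
    have := hA.spectral_theorem
    simpa using this
  -- trace computations
  have htrA : Matrix.trace A = ∑ i, μ i := by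
    rw [hspec, Matrix.trace_mul_cycle, hUU', Matrix.one_mul, Matrix.trace_diagonal]
  have hAA : A * A = Uc * Matrix.diagonal (fun i => μ i ^ 2) * star Uc := by
    rw [hspec]
    simp only [Matrix.mul_assoc]
    rw [← Matrix.mul_assoc (star Uc) Uc, hUU', Matrix.one_mul,
      ← Matrix.mul_assoc (Matrix.diagonal μ), Matrix.diagonal_mul_diagonal]
    congr 2
    ext i
    ring
  have htrAA : Matrix.trace (A * A) = ∑ i, μ i ^ 2 := by
    rw [hAA, Matrix.trace_mul_cycle, hUU', Matrix.one_mul, Matrix.trace_diagonal]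
  -- scalar hypotheses on eigenvalues
  have hσ1 : 0 < ∑ i, μ i := by rw [← htrA]; exact h1
  have hσ2 : 0 < (∑ i, μ i) ^ 2 - ∑ i, μ i ^ 2 := by
    have := h2
    rw [sigma2M, htrA, htrAA] at this
    linarith
  set σ : ℝ := ∑ i, μ i with hσ
  -- trace of A in terms of r
  have htrA' : Matrix.trace A = r / 2 - t₀ * r / 3 := by
    rw [hAdef, Matrix.trace_smul, Matrix.trace_sub, Matrix.trace_smul, Matrix.trace_one]
    simp
    rw [hr]
    ring_nf
  have hσr : σ = r / 2 - t₀ * r / 3 := by rw [← htrA, htrA']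
  -- diagonal decompositions
  have hdiag1 : Matrix.diagonal (fun k => 4 * μ k + 2 * σ) =
      (4 : ℝ) • Matrix.diagonal μ + (2 * σ) • (1 : Matrix (Fin 4) (Fin 4) ℝ) := by
    ext i j
    by_cases h : i = j <;>
      simp [Matrix.diagonal_apply, Matrix.one_apply, h]
  have hdiag2 : Matrix.diagonal (fun k => 4 * σ - 4 * μ k) =
      (4 * σ) • (1 : Matrix (Fin 4) (Fin 4) ℝ) - (4 : ℝ) • Matrix.diagonal μ := by
    ext i j
    by_cases h : i = j <;>
      simp [Matrix.diagonal_apply, Matrix.one_apply, h]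
  -- matrix identities
  have hM1 : (2 : ℝ) • S - ((t₀ - 1) * r) • (1 : Matrix (Fin 4) (Fin 4) ℝ) =
      Uc * Matrix.diagonal (fun k => 4 * μ k + 2 * σ) * star Uc := by
    rw [hdiag1, Matrix.mul_add, Matrix.add_mul, Matrix.mul_smul, Matrix.smul_mul,
      Matrix.mul_smul, Matrix.smul_mul, Matrix.mul_one, hUU, ← hspec, hAdef, hσr]
    match_scalars <;> ring
  have hM2 : ((2 - t₀) * r) • (1 : Matrix (Fin 4) (Fin 4) ℝ) - (2 : ℝ) • S =
      Uc * Matrix.diagonal (fun k => 4 * σ - 4 * μ k) * star Uc := by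
    rw [hdiag2, Matrix.mul_sub, Matrix.sub_mul, Matrix.mul_smul, Matrix.smul_mul,
      Matrix.mul_smul, Matrix.smul_mul, Matrix.mul_one, hUU, ← hspec, hAdef, hσr]
    match_scalars <;> ring
  have hkey := key μ hσ1 hσ2
  refine ⟨?_, ?_⟩
  · rw [hM1, hUc]
    exact posdef_conj _ _ fun k => (hkey k).1
  · rw [hM2, hUc]
    exact posdef_conj _ _ fun k => (hkey k).2
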